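/- Let $n, s, k$ be positive integers with $k \ge 2$, $s \ge 1$, $n \ge \tfrac{3}{2}k + 5$ and $n \ge (k+1)s + 1$. If $s > 1$, then the spectral radius of the graph $sK_1 \vee ((ks+1)K_1 \cup K_{n-(k+1)s-1})$ is strictly less than the spectral radius of the graph $K_1 \vee ((k+1)K_1 \cup K_{n-k-2})$ (the $s=1$ member of this family). -/

import Mathlib

open Classical in
/-- The adjacency matrix of a simple graph, with real entries. -/
noncomputable def adjMat {V : Type} [Fintype V] (G : SimpleGraph V) : Matrix V V ℝ :=
  fun i j => if G.Adj i j then 1 else 0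

/-- The largest real eigenvalue of a real matrix. -/
noncomputable def maxEig {V : Type} [Fintype V] (M : Matrix V V ℝ) : ℝ :=
  sSup {t : ℝ | ∃ x : V → ℝ, x ≠ 0 ∧ M.mulVec x = t • x}

/-- The spectral radius (largest adjacency eigenvalue) of a graph. -/
noncomputable def specRad {V : Type} [Fintype V] (G : SimpleGraph V) : ℝ :=
  maxEig (adjMat G)

/-- The signless Laplacian matrix `Q(G) = D(G) + A(G)`. -/
noncomputable def qMat {V : Type} [Fintype V] [DecidableEq V] (G : SimpleGraph V) :
    Matrix V V ℝ :=
  Matrix.diagonal (fun v => ∑ w, adjMat G v w) + adjMat G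

/-- The signless Laplacian spectral radius of a graph. -/
noncomputable def qRad {V : Type} [Fintype V] [DecidableEq V] (G : SimpleGraph V) : ℝ :=
  maxEig (qMat G)

/-- The graph `K_s ∨ (a K_1 ∪ K_{n-s-a})` on vertex set `Fin n`:
the first `s` vertices form a clique joined to everything, the next `a` vertices are
independent, and the last `n - s - a` vertices form a clique. -/
def modelA (n s a : ℕ) : SimpleGraph (Fin n) where
  Adj i j := i ≠ j ∧ ((i : ℕ) < s ∨ (j : ℕ) < s ∨ (s + a ≤ (i : ℕ) ∧ s + a ≤ (j : ℕ)))
  symm := ⟨by rintro i j ⟨h1, h2⟩; exact ⟨h1.symm, by tauto⟩⟩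
  loopless := ⟨fun i h => h.1 rfl⟩

/-- The graph `s K_1 ∨ (a K_1 ∪ K_{n-s-a})` on vertex set `Fin n`:
the first `s` vertices are independent but joined to everything else, the next `a`
vertices are independent, and the last `n - s - a` vertices form a clique. -/
def modelB (n s a : ℕ) : SimpleGraph (Fin n) where
  Adj i j := i ≠ j ∧ (((i : ℕ) < s ∧ ¬ (j : ℕ) < s) ∨ ((j : ℕ) < s ∧ ¬ (i : ℕ) < s) ∨
    (s + a ≤ (i : ℕ) ∧ s + a ≤ (j : ℕ)))
  symm := ⟨by rintro i j ⟨h1, h2⟩; exact ⟨h1.symm, by tauto⟩⟩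
  loopless := ⟨fun i h => h.1 rfl⟩

/-- `M` is a matching of `G`: a set of pairwise disjoint edges of `G`. -/
def IsMatchingIn {V : Type} (G : SimpleGraph V) (M : Finset (Sym2 V)) : Prop :=
  (↑M : Set (Sym2 V)) ⊆ G.edgeSet ∧
    ∀ e ∈ M, ∀ f ∈ M, e ≠ f → ∀ v : V, ¬(v ∈ e ∧ v ∈ f)

/-- `H` is an `S(k)`-factor of `G`: a spanning subgraph of `G` each of whose connected
components is isomorphic to a star `K_{1,m}` with `1 ≤ m ≤ k`. -/
def IsSkFactor {V : Type} [Fintype V] (G H : SimpleGraph V) (k : ℕ) : Prop :=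
  H ≤ G ∧ ∀ c : H.ConnectedComponent, ∃ m : ℕ, 1 ≤ m ∧ m ≤ k ∧
    Nonempty ((H.induce c.supp) ≃g completeBipartiteGraph Unit (Fin m))

lemma amgm_w (a b x y : ℝ) (ha : 0 < a) (hb : 0 < b) :
    x * y ≤ ((b / a) * x ^ 2 + (a / b) * y ^ 2) / 2 := by
  have h1 : 0 ≤ (b * x - a * y) ^ 2 / (a * b) := by positivity
  have h2 : (b / a) * x ^ 2 + (a / b) * y ^ 2 - 2 * (x * y) = (b * x - a * y) ^ 2 / (a * b) := by
    field_simp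
    ring
  linarith


lemma eig_le {n : ℕ} (M : Matrix (Fin n) (Fin n) ℝ)
    (hsym : ∀ i j, M i j = M j i) (hpos : ∀ i j, 0 ≤ M i j)
    (w : Fin n → ℝ) (hw : ∀ i, 0 < w i) (C : ℝ)
    (hrow : ∀ i, (∑ j, M i j * w j) ≤ C * w i)
    (t : ℝ) (x : Fin n → ℝ) (hx : x ≠ 0) (hMx : M.mulVec x = t • x) : t ≤ C := by
  have hS : 0 < ∑ i, x i ^ 2 := by
    have hne : ∃ i, x i ≠ 0 := by
      by_contra h; push_neg at h; exact hx (funext h)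
    obtain ⟨i0, hi0⟩ := hne
    have h1 : 0 < x i0 ^ 2 := by positivity
    have h2 : ∀ i ∈ Finset.univ, 0 ≤ x i ^ 2 := fun i _ => sq_nonneg _
    calc (0:ℝ) < x i0 ^ 2 := h1
      _ ≤ ∑ i, x i ^ 2 := Finset.single_le_sum h2 (Finset.mem_univ i0)
  have e1 : t * ∑ i, x i ^ 2 = ∑ i, ∑ j, M i j * (x i * x j) := by
    have hmv : ∀ i, (∑ j, M i j * x j) = t * x i := by
      intro i
      have := congrFun hMx i
      simpa [Matrix.mulVec, dotProduct] using this
    calc t * ∑ i, x i ^ 2 = ∑ i, x i * (t * x i) := by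
          rw [Finset.mul_sum]; exact Finset.sum_congr rfl fun i _ => by ring
      _ = ∑ i, x i * ∑ j, M i j * x j := by
          exact Finset.sum_congr rfl fun i _ => by rw [hmv i]
      _ = ∑ i, ∑ j, M i j * (x i * x j) := by
          refine Finset.sum_congr rfl fun i _ => ?_
          rw [Finset.mul_sum]; exact Finset.sum_congr rfl fun j _ => by ring
  have e2 : ∑ i, ∑ j, M i j * (x i * x j)
      ≤ ∑ i, ∑ j, M i j * (((w j / w i) * x i ^ 2 + (w i / w j) * x j ^ 2) / 2) :=
    Finset.sum_le_sum fun i _ => Finset.sum_le_sum fun j _ =>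
      mul_le_mul_of_nonneg_left (amgm_w (w i) (w j) (x i) (x j) (hw i) (hw j)) (hpos i j)
  have swap : ∑ i, ∑ j, M i j * ((w i / w j) * x j ^ 2)
      = ∑ i, ∑ j, M i j * ((w j / w i) * x i ^ 2) := by
    rw [Finset.sum_comm]
    exact Finset.sum_congr rfl fun j _ => Finset.sum_congr rfl fun i _ => by rw [hsym]
  have e3 : ∑ i, ∑ j, M i j * (((w j / w i) * x i ^ 2 + (w i / w j) * x j ^ 2) / 2)
      = ∑ i, ∑ j, M i j * ((w j / w i) * x i ^ 2) := by
    have expand : ∀ i j : Fin n, M i j * (((w j / w i) * x i ^ 2 + (w i / w j) * x j ^ 2) / 2)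
        = (M i j * ((w j / w i) * x i ^ 2) + M i j * ((w i / w j) * x j ^ 2)) / 2 :=
      fun i j => by ring
    calc ∑ i, ∑ j, M i j * (((w j / w i) * x i ^ 2 + (w i / w j) * x j ^ 2) / 2)
        = ∑ i, ∑ j, (M i j * ((w j / w i) * x i ^ 2) + M i j * ((w i / w j) * x j ^ 2)) / 2 := by
          exact Finset.sum_congr rfl fun i _ => Finset.sum_congr rfl fun j _ => expand i j
      _ = ((∑ i, ∑ j, M i j * ((w j / w i) * x i ^ 2))
            + ∑ i, ∑ j, M i j * ((w i / w j) * x j ^ 2)) / 2 := by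
          simp only [← Finset.sum_div, Finset.sum_add_distrib]
      _ = ∑ i, ∑ j, M i j * ((w j / w i) * x i ^ 2) := by rw [swap]; ring
  have e4 : ∑ i, ∑ j, M i j * ((w j / w i) * x i ^ 2) ≤ C * ∑ i, x i ^ 2 := by
    rw [Finset.mul_sum]
    refine Finset.sum_le_sum fun i _ => ?_
    have hwine : w i ≠ 0 := ne_of_gt (hw i)
    have hinner : ∑ j, M i j * ((w j / w i) * x i ^ 2) = (x i ^ 2 / w i) * ∑ j, M i j * w j := by
      rw [Finset.mul_sum]; exact Finset.sum_congr rfl fun j _ => by ring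
    rw [hinner]
    have h1 : (x i ^ 2 / w i) * (∑ j, M i j * w j) ≤ (x i ^ 2 / w i) * (C * w i) :=
      mul_le_mul_of_nonneg_left (hrow i) (div_nonneg (sq_nonneg _) (le_of_lt (hw i)))
    have h2 : (x i ^ 2 / w i) * (C * w i) = C * x i ^ 2 := by
      field_simp
    linarith
  have hmain : t * ∑ i, x i ^ 2 ≤ C * ∑ i, x i ^ 2 := by
    rw [e1]; calc ∑ i, ∑ j, M i j * (x i * x j) ≤ _ := e2
      _ = _ := e3
      _ ≤ _ := e4
  exact le_of_mul_le_mul_right hmain hS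

lemma modelB_rowsum (n s a : ℕ) (hsa : s + a ≤ n) (u v c : ℝ) (i : Fin n) :
    (∑ j : Fin n, adjMat (modelB n s a) i j *
        (if (j : ℕ) < s then u else if (j : ℕ) < s + a then v else c))
      = if (i : ℕ) < s then (a : ℝ) * v + ((n : ℝ) - s - a) * c
        else if (i : ℕ) < s + a then (s : ℝ) * u
        else (s : ℝ) * u + ((n : ℝ) - s - a - 1) * c := by
  have hi0n : (i : ℕ) < n := i.isLt
  set i0 := (i : ℕ) with hi0def
  set F : ℕ → ℝ := fun m =>
    if (i0 ≠ m ∧ ((i0 < s ∧ ¬ m < s) ∨ (m < s ∧ ¬ i0 < s) ∨ (s + a ≤ i0 ∧ s + a ≤ m)))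
    then (if m < s then u else if m < s + a then v else c) else 0 with hF
  have hpt : ∀ j : Fin n, adjMat (modelB n s a) i j *
      (if (j : ℕ) < s then u else if (j : ℕ) < s + a then v else c) = F (j : ℕ) := by
    intro j
    simp only [adjMat, hF]
    by_cases h : i0 ≠ (j : ℕ) ∧ ((i0 < s ∧ ¬ (j : ℕ) < s) ∨ ((j : ℕ) < s ∧ ¬ i0 < s)
        ∨ (s + a ≤ i0 ∧ s + a ≤ (j : ℕ)))
    · have hadj : (modelB n s a).Adj i j := ⟨fun he => h.1 (congrArg Fin.val he), h.2⟩
      rw [if_pos h, if_pos hadj, one_mul]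
    · have hadj : ¬ (modelB n s a).Adj i j := by
        intro hadj
        exact h ⟨fun he => hadj.1 (Fin.ext he), hadj.2⟩
      rw [if_neg h, if_neg hadj, zero_mul]
  rw [Finset.sum_congr rfl (fun j _ => hpt j), Fin.sum_univ_eq_sum_range F n,
    Finset.range_eq_Ico, ← Finset.sum_Ico_consecutive F (Nat.zero_le (s + a)) hsa,
    ← Finset.sum_Ico_consecutive F (Nat.zero_le s) (Nat.le_add_right s a)]
  have hcard1 : (Finset.Ico 0 s).card = s := by rw [Nat.card_Ico]; omega
  have hcard2 : (Finset.Ico s (s + a)).card = a := by rw [Nat.card_Ico]; omega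
  have hcard3 : (Finset.Ico (s + a) n).card = n - (s + a) := by rw [Nat.card_Ico]
  by_cases h1 : i0 < s
  · rw [if_pos h1]
    have e1 : ∑ m ∈ Finset.Ico 0 s, F m = 0 :=
      Finset.sum_eq_zero fun m hm => by
        rw [Finset.mem_Ico] at hm; simp only [hF]; exact if_neg (by omega)
    have e2 : ∑ m ∈ Finset.Ico s (s + a), F m = a * v := by
      have hc : ∀ m ∈ Finset.Ico s (s + a), F m = v := by
        intro m hm; rw [Finset.mem_Ico] at hm
        simp only [hF]
        rw [if_pos (by omega), if_neg (by omega), if_pos (by omega)]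
      rw [Finset.sum_congr rfl hc, Finset.sum_const, hcard2, nsmul_eq_mul]
    have e3 : ∑ m ∈ Finset.Ico (s + a) n, F m = ((n - (s + a) : ℕ) : ℝ) * c := by
      have hc : ∀ m ∈ Finset.Ico (s + a) n, F m = c := by
        intro m hm; rw [Finset.mem_Ico] at hm
        simp only [hF]
        rw [if_pos (by omega), if_neg (by omega), if_neg (by omega)]
      rw [Finset.sum_congr rfl hc, Finset.sum_const, hcard3, nsmul_eq_mul]
    rw [e1, e2, e3, Nat.cast_sub hsa]
    push_cast
    ring
  · rw [if_neg h1]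
    by_cases h2 : i0 < s + a
    · rw [if_pos h2]
      have e1 : ∑ m ∈ Finset.Ico 0 s, F m = s * u := by
        have hc : ∀ m ∈ Finset.Ico 0 s, F m = u := by
          intro m hm; rw [Finset.mem_Ico] at hm
          simp only [hF]
          rw [if_pos (by omega), if_pos (by omega)]
        rw [Finset.sum_congr rfl hc, Finset.sum_const, hcard1, nsmul_eq_mul]
      have e2 : ∑ m ∈ Finset.Ico s (s + a), F m = 0 :=
        Finset.sum_eq_zero fun m hm => by
          rw [Finset.mem_Ico] at hm; simp only [hF]; exact if_neg (by omega)
      have e3 : ∑ m ∈ Finset.Ico (s + a) n, F m = 0 :=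
        Finset.sum_eq_zero fun m hm => by
          rw [Finset.mem_Ico] at hm; simp only [hF]; exact if_neg (by omega)
      rw [e1, e2, e3]
      ring
    · rw [if_neg h2]
      have e1 : ∑ m ∈ Finset.Ico 0 s, F m = s * u := by
        have hc : ∀ m ∈ Finset.Ico 0 s, F m = u := by
          intro m hm; rw [Finset.mem_Ico] at hm
          simp only [hF]
          rw [if_pos (by omega), if_pos (by omega)]
        rw [Finset.sum_congr rfl hc, Finset.sum_const, hcard1, nsmul_eq_mul]
      have e2 : ∑ m ∈ Finset.Ico s (s + a), F m = 0 :=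
        Finset.sum_eq_zero fun m hm => by
          rw [Finset.mem_Ico] at hm; simp only [hF]; exact if_neg (by omega)
      have e3 : ∑ m ∈ Finset.Ico (s + a) n, F m = ((n - (s + a) : ℕ) : ℝ) * c - c := by
        have hc : ∀ m ∈ Finset.Ico (s + a) n, F m = c - (if m = i0 then c else 0) := by
          intro m hm; rw [Finset.mem_Ico] at hm
          simp only [hF]
          by_cases hm0 : m = i0
          · rw [if_neg (by omega), if_pos hm0]; ring
          · rw [if_pos (by omega), if_neg (by omega), if_neg (by omega), if_neg hm0]; ring
        rw [Finset.sum_congr rfl hc, Finset.sum_sub_distrib, Finset.sum_const, hcard3,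
          nsmul_eq_mul, Finset.sum_ite_eq' (Finset.Ico (s + a) n) i0 (fun _ => c),
          if_pos (Finset.mem_Ico.mpr ⟨by omega, hi0n⟩)]
      rw [e1, e2, e3, Nat.cast_sub hsa]
      push_cast
      ring

lemma adjMat_symm {n : ℕ} (G : SimpleGraph (Fin n)) (i j : Fin n) :
    adjMat G i j = adjMat G j i := by
  unfold adjMat
  by_cases h : G.Adj i j
  · rw [if_pos h, if_pos (G.adj_symm h)]
  · rw [if_neg h, if_neg (fun h' => h (G.adj_symm h'))]

lemma adjMat_nonneg {n : ℕ} (G : SimpleGraph (Fin n)) (i j : Fin n) :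
    0 ≤ adjMat G i j := by
  unfold adjMat; split <;> norm_num

lemma cubic_root (T K : ℝ) (hT : 4 ≤ T) (hTK : K / 2 + 3 ≤ T) (hK : 2 ≤ K) :
    ∃ lam : ℝ, T < lam ∧ (lam ^ 2 - (K + 1)) * (lam - T + 1) - T * lam = 0 := by
  set f : ℝ → ℝ := fun X => (X ^ 2 - (K + 1)) * (X - T + 1) - T * X with hf
  have hcont : ContinuousOn f (Set.Icc T (T + 2)) := by
    have : Continuous f := by rw [hf]; fun_prop
    exact this.continuousOn
  have hfa : f T = -(K + 1) := by simp only [hf]; ring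
  have hfb : 0 < f (T + 2) := by
    simp only [hf]
    nlinarith
  have hsub := intermediate_value_Icc (by linarith : T ≤ T + 2) hcont
  have h0 : (0:ℝ) ∈ Set.Icc (f T) (f (T + 2)) := ⟨by rw [hfa]; linarith, le_of_lt hfb⟩
  obtain ⟨lam, hmem, heq⟩ := hsub h0
  refine ⟨lam, ?_, by simpa [hf] using heq⟩
  rcases lt_or_eq_of_le hmem.1 with h | h
  · exact h
  · exfalso
    rw [← h, hfa] at heq
    linarith


set_option maxHeartbeats 1200000 in
/-- Lemma: for `k ≥ 2`, `n ≥ (3/2)k + 5`, `n ≥ (k+1)s + 1` and `s > 1`,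
`ρ(sK_1 ∨ ((ks+1)K_1 ∪ K_{n-(k+1)s-1})) < ρ(K_1 ∨ ((k+1)K_1 ∪ K_{n-k-2}))`. -/
theorem stmt_11 (n s k : ℕ) (hk : 2 ≤ k) (hs : 1 ≤ s)
    (h1 : 3 * k + 10 ≤ 2 * n) (h2 : (k + 1) * s + 1 ≤ n) (hs1 : 1 < s) :
    specRad (modelB n s (k * s + 1)) < specRad (modelB n 1 (k + 1)) := by
  -- real versions of the hypotheses
  have hk2 : (2:ℝ) ≤ (k:ℝ) := by exact_mod_cast hk
  have hs2 : (2:ℝ) ≤ (s:ℝ) := by exact_mod_cast hs1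
  have hn1 : 3 * (k:ℝ) + 10 ≤ 2 * (n:ℝ) := by exact_mod_cast h1
  have h2' : k * s + s + 1 ≤ n := by
    have : (k + 1) * s = k * s + s := by ring
    omega
  have hn2 : (k:ℝ) * s + s + 1 ≤ (n:ℝ) := by exact_mod_cast h2'
  have hkn : k + 2 ≤ n := by omega
  have hknR : (k:ℝ) + 2 ≤ (n:ℝ) := by exact_mod_cast hkn
  -- T = n - k - 2
  have hT4 : (4:ℝ) ≤ (n:ℝ) - k - 2 := by linarith
  have hTpos : (0:ℝ) < (n:ℝ) - k - 2 := by linarith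
  have haR : (0:ℝ) < (k:ℝ) * s + 1 := by nlinarith
  -- feasibility:  2 s (k s + 1) ≤ T * (2T - b)  with b = n - s - (k s + 1)
  have hfeas : 2 * (s:ℝ) * ((k:ℝ) * s + 1)
      ≤ ((n:ℝ) - k - 2) * (2 * ((n:ℝ) - k - 2) - ((n:ℝ) - s - ((k:ℝ) * s + 1))) := by
    nlinarith [mul_nonneg (sub_nonneg.2 hk2) (sub_nonneg.2 hs2),
      mul_nonneg (by linarith : (0:ℝ) ≤ (n:ℝ) - (k:ℝ)*s - s - 1) (sub_nonneg.2 hs2),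
      mul_nonneg (by linarith : (0:ℝ) ≤ (n:ℝ) - (k:ℝ)*s - s - 1) (sub_nonneg.2 hk2),
      mul_nonneg (by linarith : (0:ℝ) ≤ (n:ℝ) - (k:ℝ)*s - s - 1)
        (by linarith : (0:ℝ) ≤ 2*(n:ℝ) - 3*k - 10),
      mul_nonneg (by linarith : (0:ℝ) ≤ 2*(n:ℝ) - 3*k - 10) (sub_nonneg.2 hs2),
      mul_nonneg (by linarith : (0:ℝ) ≤ 2*(n:ℝ) - 3*k - 10) (sub_nonneg.2 hk2),
      sq_nonneg ((k:ℝ) - 2), sq_nonneg ((s:ℝ) - 2),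
      mul_nonneg (mul_nonneg (sub_nonneg.2 hk2) (sub_nonneg.2 hs2)) (sub_nonneg.2 hs2),
      mul_nonneg (mul_nonneg (sub_nonneg.2 hk2) (sub_nonneg.2 hs2)) (sub_nonneg.2 hk2)]
  have hdivfeas : 2 * (s:ℝ) / ((n:ℝ) - k - 2)
      ≤ (2 * ((n:ℝ) - k - 2) - ((n:ℝ) - s - ((k:ℝ) * s + 1))) / ((k:ℝ) * s + 1) := by
    rw [div_le_div_iff₀ hTpos haR]
    nlinarith [hfeas]
  set t0 : ℝ := (2 * (s:ℝ) / ((n:ℝ) - k - 2)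
      + (2 * ((n:ℝ) - k - 2) - ((n:ℝ) - s - ((k:ℝ) * s + 1))) / ((k:ℝ) * s + 1)) / 2 with ht0def
  have ht0lo : 2 * (s:ℝ) / ((n:ℝ) - k - 2) ≤ t0 := by rw [ht0def]; linarith
  have ht0hi : t0 ≤ (2 * ((n:ℝ) - k - 2) - ((n:ℝ) - s - ((k:ℝ) * s + 1))) / ((k:ℝ) * s + 1) := by
    rw [ht0def]; linarith
  have ht0pos : 0 < t0 :=
    lt_of_lt_of_le (div_pos (by linarith) hTpos) ht0lo
  have hrowm : 2 * (s:ℝ) ≤ t0 * ((n:ℝ) - k - 2) := (div_le_iff₀ hTpos).1 ht0lo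
  have hrowj : t0 * ((k:ℝ) * s + 1) ≤ 2 * ((n:ℝ) - k - 2) - ((n:ℝ) - s - ((k:ℝ) * s + 1)) :=
    (le_div_iff₀ haR).1 ht0hi
  have hrowc : 2 * (s:ℝ) + ((n:ℝ) - s - ((k:ℝ) * s + 1) - 1) ≤ ((n:ℝ) - k - 2) := by
    nlinarith [mul_nonneg (by linarith : (0:ℝ) ≤ (k:ℝ) - 2) (by linarith : (0:ℝ) ≤ (s:ℝ) - 2)]
  clear_value t0
  have hsa_s : s + (k * s + 1) ≤ n := by omega
  have hupper : specRad (modelB n s (k * s + 1)) ≤ (n:ℝ) - k - 2 := by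
    rw [specRad, maxEig]
    apply Real.sSup_le _ (by linarith)
    rintro y ⟨x, hx, hMx⟩
    refine eig_le _ (adjMat_symm _) (adjMat_nonneg _)
      (fun j => if (j:ℕ) < s then 2 else if (j:ℕ) < s + (k * s + 1) then t0 else 1)
      ?_ ((n:ℝ) - k - 2) ?_ y x hx hMx
    · intro i
      split
      · norm_num
      · split
        · exact ht0pos
        · norm_num
    · intro i
      rw [modelB_rowsum n s (k * s + 1) hsa_s 2 t0 1 i]
      by_cases hi1 : (i:ℕ) < s
      · rw [if_pos hi1, if_pos hi1]
        push_cast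
        linarith [hrowj]
      · rw [if_neg hi1, if_neg hi1]
        by_cases hi2 : (i:ℕ) < s + (k * s + 1)
        · rw [if_pos hi2, if_pos hi2]
          push_cast
          linarith [hrowm]
        · rw [if_neg hi2, if_neg hi2]
          push_cast
          linarith [hrowc]
  -- lower bound side
  have hsa1 : 1 + (k + 1) ≤ n := by omega
  obtain ⟨lam, hlamgt, hlam0⟩ := cubic_root ((n:ℝ) - k - 2) (k:ℝ) hT4 (by linarith) hk2
  have hn0 : 0 < n := by omega
  have hMx1 : (adjMat (modelB n 1 (k + 1))).mulVec
      (fun j : Fin n => if (j:ℕ) < 1 then lam * (lam - ((n:ℝ) - k - 2) + 1)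
        else if (j:ℕ) < 1 + (k + 1) then lam - ((n:ℝ) - k - 2) + 1 else lam)
      = lam • (fun j : Fin n => if (j:ℕ) < 1 then lam * (lam - ((n:ℝ) - k - 2) + 1)
        else if (j:ℕ) < 1 + (k + 1) then lam - ((n:ℝ) - k - 2) + 1 else lam) := by
    funext i
    simp only [Matrix.mulVec, dotProduct, Pi.smul_apply, smul_eq_mul]
    rw [modelB_rowsum n 1 (k + 1) hsa1
      (lam * (lam - ((n:ℝ) - k - 2) + 1)) (lam - ((n:ℝ) - k - 2) + 1) lam i]
    by_cases hi1 : (i:ℕ) < 1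
    · rw [if_pos hi1, if_pos hi1]
      push_cast
      linear_combination (-1 : ℝ) * hlam0
    · rw [if_neg hi1, if_neg hi1]
      by_cases hi2 : (i:ℕ) < 1 + (k + 1)
      · rw [if_pos hi2, if_pos hi2]
        push_cast
        ring
      · rw [if_neg hi2, if_neg hi2]
        push_cast
        ring
  have hxne : (fun j : Fin n => if (j:ℕ) < 1 then lam * (lam - ((n:ℝ) - k - 2) + 1)
      else if (j:ℕ) < 1 + (k + 1) then lam - ((n:ℝ) - k - 2) + 1 else lam) ≠ 0 := by
    intro hzero
    have h0 := congrFun hzero ⟨0, hn0⟩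
    simp only [Pi.zero_apply, Fin.val_mk, Nat.zero_lt_one, if_true] at h0
    nlinarith [hlamgt, hT4]
  have hbdd : BddAbove {t : ℝ | ∃ x : Fin n → ℝ, x ≠ 0 ∧
      (adjMat (modelB n 1 (k + 1))).mulVec x = t • x} := by
    refine ⟨(n:ℝ), ?_⟩
    rintro y ⟨x, hx, hMx⟩
    refine eig_le _ (adjMat_symm _) (adjMat_nonneg _)
      (fun _ => (1:ℝ)) (fun _ => one_pos) (n:ℝ) ?_ y x hx hMx
    intro i
    have h1 : (fun _ : Fin n => (1:ℝ)) = (fun j : Fin n =>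
        if (j:ℕ) < 1 then (1:ℝ) else if (j:ℕ) < 1 + (k + 1) then 1 else 1) := by
      funext j; split <;> [rfl; split <;> rfl]
    show ∑ j, adjMat (modelB n 1 (k + 1)) i j * (fun _ : Fin n => (1:ℝ)) j ≤ (n:ℝ) * (fun _ : Fin n => (1:ℝ)) i
    rw [h1]
    rw [modelB_rowsum n 1 (k + 1) hsa1 1 1 1 i]
    dsimp only
    by_cases hi1 : (i:ℕ) < 1
    · rw [if_pos hi1, if_pos hi1]
      push_cast
      linarith
    · rw [if_neg hi1, if_neg hi1]
      by_cases hi2 : (i:ℕ) < 1 + (k + 1)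
      · rw [if_pos hi2, if_pos hi2]
        push_cast
        linarith
      · rw [if_neg hi2, if_neg hi2]
        push_cast
        linarith
  have hlower : lam ≤ specRad (modelB n 1 (k + 1)) := by
    rw [specRad, maxEig]
    exact le_csSup hbdd ⟨_, hxne, hMx1⟩
  linarith [hupper, hlamgt, hlower]
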